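/- For the following three classes of locally compact groups, class (a) equals class (c), assuming (as established separately) that connected [IN]-groups are amenable and that totally disconnected [IN]-groups admit open compact normal subgroups: (a) groups G admitting a closed normal amenable subgroup N with G/N an [IN]-group; (c) groups admitting an open normal amenable subgroup. In particular, (c) ⊆ (a) trivially, and (a) ⊆ (c). -/

import Mathlib

open scoped Topology

/-- A topological group is amenable if there is a left-invariant mean on the
bounded continuous real-valued functions. -/
def IsAmenable (G : Type*) [Group G] [TopologicalSpace G] [IsTopologicalGroup G] : Prop :=
  ∃ m : BoundedContinuousFunction G ℝ →ₗ[ℝ] ℝ,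
    (∀ f : BoundedContinuousFunction G ℝ, 0 ≤ f → 0 ≤ m f) ∧ m 1 = 1 ∧
    ∀ (g : G) (f : BoundedContinuousFunction G ℝ),
      m (f.compContinuous ⟨fun x => g * x, by continuity⟩) = m f

/-- A topological group is an [IN]-group if some relatively compact neighbourhood
of the identity is invariant under all inner automorphisms. -/
def IsINGroup (G : Type*) [Group G] [TopologicalSpace G] : Prop :=
  ∃ W ∈ 𝓝 (1 : G), IsCompact (closure W) ∧ ∀ x : G, (fun g => x * g * x⁻¹) '' W = W

open MeasureTheory in
/-- Compact Hausdorff topological groups are amenable, via the Haar probability measure. -/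
theorem isAmenable_of_compactSpace (K : Type*) [Group K] [TopologicalSpace K]
    [IsTopologicalGroup K] [CompactSpace K] [T2Space K] : IsAmenable K := by
  haveI : Nonempty K := ⟨1⟩
  borelize K
  let μ : Measure K := Measure.haarMeasure (⊤ : TopologicalSpace.PositiveCompacts K)
  haveI : IsProbabilityMeasure μ := ⟨by
    simpa [TopologicalSpace.PositiveCompacts.coe_top] using
      (Measure.haarMeasure_self (K₀ := (⊤ : TopologicalSpace.PositiveCompacts K)))⟩
  refine ⟨{ toFun := fun f => ∫ x, f x ∂μ
            map_add' := fun f g => by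
              simpa using integral_add (f.integrable μ) (g.integrable μ)
            map_smul' := fun c f => by
              simpa using integral_smul c (fun x => f x) }, ?_, ?_, ?_⟩
  · intro f hf
    exact integral_nonneg fun x => hf x
  · simp
  · intro g f
    exact MeasureTheory.integral_mul_left_eq_self (fun x => f x) g

/-- The identity component of a topological group is a normal subgroup. -/
theorem connectedComponentOfOne_normal (Q : Type*) [Group Q] [TopologicalSpace Q]
    [IsTopologicalGroup Q] : (Subgroup.connectedComponentOfOne Q).Normal := by
  constructor
  intro n hn g
  have h := (IsTopologicalGroup.continuous_conj g).image_connectedComponent_subset (1 : Q)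
  have hmem : g * n * g⁻¹ ∈ (fun h : Q => g * h * g⁻¹) '' connectedComponent (1 : Q) :=
    ⟨n, hn, rfl⟩
  have := h hmem
  simp at this
  exact this

theorem connectedComponent_eq_iff_group {Q : Type*} [Group Q] [TopologicalSpace Q]
    [IsTopologicalGroup Q] (a b : Q) :
    connectedComponent a = connectedComponent b ↔ a⁻¹ * b ∈ connectedComponent (1 : Q) := by
  constructor
  · intro h
    have hb : b ∈ connectedComponent a := h ▸ mem_connectedComponent
    have h2 := (continuous_mul_left a⁻¹).image_connectedComponent_subset a
    have : a⁻¹ * b ∈ connectedComponent (a⁻¹ * a) := h2 ⟨b, hb, rfl⟩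
    simpa using this
  · intro h
    have h2 := (continuous_mul_left a).image_connectedComponent_subset (1 : Q)
    have : b ∈ connectedComponent (a * 1) := h2 ⟨a⁻¹ * b, h, by group⟩
    rw [mul_one] at this
    exact connectedComponent_eq this

theorem stmt7 {G : Type u} [Group G] [TopologicalSpace G] [IsTopologicalGroup G]
    [LocallyCompactSpace G]
    -- (i) connected [IN]-groups are amenable
    (h1 : ∀ (H : Type u) [Group H] [TopologicalSpace H] [IsTopologicalGroup H]
      [LocallyCompactSpace H] [ConnectedSpace H], IsINGroup H → IsAmenable H)
    -- (ii) totally disconnected [IN]-groups admit open compact normal subgroups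
    (h2 : ∀ (H : Type u) [Group H] [TopologicalSpace H] [IsTopologicalGroup H]
      [LocallyCompactSpace H] [TotallyDisconnectedSpace H], IsINGroup H →
      ∃ N : Subgroup H, N.Normal ∧ IsOpen (N : Set H) ∧ IsCompact (N : Set H))
    -- (iii) the preimage under a quotient map (with amenable kernel) of an
    -- amenable subgroup of the quotient is amenable
    (h3 : ∀ (N : Subgroup G) (_ : N.Normal), IsAmenable N →
      ∀ M : Subgroup (G ⧸ N), IsAmenable M →
        IsAmenable (M.comap (QuotientGroup.mk' N))) :
    (∃ (N : Subgroup G) (_ : N.Normal), IsClosed (N : Set G) ∧ IsAmenable N ∧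
        IsINGroup (G ⧸ N)) ↔
      ∃ N : Subgroup G, N.Normal ∧ IsOpen (N : Set G) ∧ IsAmenable N := by
  constructor
  · -- the hard direction (a) ⊆ (c)
    rintro ⟨N, hNn, hNclosed, hNam, hQIN⟩
    haveI := hNn
    obtain ⟨W, hW1, hWc, hWconj⟩ := hQIN
    -- the identity component of the quotient
    set C : Subgroup (G ⧸ N) := Subgroup.connectedComponentOfOne (G ⧸ N) with hC
    haveI hCn : C.Normal := connectedComponentOfOne_normal _
    have hCset : (C : Set (G ⧸ N)) = connectedComponent (1 : G ⧸ N) := rfl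
    have hCclosed : IsClosed (C : Set (G ⧸ N)) := by
      rw [hCset]; exact isClosed_connectedComponent
    haveI : LocallyCompactSpace ↥C :=
      hCclosed.isClosedEmbedding_subtypeVal.locallyCompactSpace
    haveI : ConnectedSpace ↥C := by
      have := isConnected_iff_connectedSpace.mp (isConnected_connectedComponent (x := (1 : G ⧸ N)))
      exact this
    -- `C` is an [IN]-group
    have hCIN : IsINGroup ↥C := by
      refine ⟨(Subtype.val : ↥C → G ⧸ N) ⁻¹' W, ?_, ?_, ?_⟩
      · exact continuous_subtype_val.continuousAt.preimage_mem_nhds hW1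
      · have hpreclosed : IsClosed ((Subtype.val : ↥C → G ⧸ N) ⁻¹' closure W) :=
          (isClosed_closure).preimage continuous_subtype_val
        have hsub : closure ((Subtype.val : ↥C → G ⧸ N) ⁻¹' W) ⊆
            (Subtype.val : ↥C → G ⧸ N) ⁻¹' closure W :=
          closure_minimal (Set.preimage_mono subset_closure) hpreclosed
        have hcomp : IsCompact ((Subtype.val : ↥C → G ⧸ N) ⁻¹' closure W) := by
          apply Topology.IsEmbedding.subtypeVal.isCompact_iff.mpr
          have himg : (Subtype.val : ↥C → G ⧸ N) '' ((Subtype.val : ↥C → G ⧸ N) ⁻¹' closure W) =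
              (C : Set (G ⧸ N)) ∩ closure W := by
            ext z
            constructor
            · rintro ⟨⟨w, hw⟩, hmem, rfl⟩
              exact ⟨hw, hmem⟩
            · rintro ⟨hz, hcl⟩
              exact ⟨⟨z, hz⟩, hcl, rfl⟩
          rw [himg]
          exact hWc.inter_left hCclosed
        exact hcomp.of_isClosed_subset isClosed_closure hsub
      · intro x
        ext y
        constructor
        · rintro ⟨z, hz, rfl⟩
          have : (x : G ⧸ N) * z * (x : G ⧸ N)⁻¹ ∈ W := by
            rw [← hWconj (x : G ⧸ N)]
            exact ⟨(z : G ⧸ N), hz, rfl⟩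
          simpa using this
        · intro hy
          refine ⟨x⁻¹ * y * x, ?_, by group⟩
          have : (x : G ⧸ N)⁻¹ * y * ((x : G ⧸ N)⁻¹)⁻¹ ∈ W := by
            rw [← hWconj ((x : G ⧸ N)⁻¹)]
            exact ⟨(y : G ⧸ N), hy, rfl⟩
          simpa using this
    have hCam : IsAmenable ↥C := h1 ↥C hCIN
    -- the preimage of the identity component
    set N₂ : Subgroup G := C.comap (QuotientGroup.mk' N) with hN₂
    haveI hN₂n : N₂.Normal := hCn.comap _
    have hN₂am : IsAmenable ↥N₂ := h3 N hNn hNam C hCam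
    haveI hN₂closed : IsClosed (N₂ : Set G) := by
      rw [hN₂, Subgroup.coe_comap, QuotientGroup.coe_mk']
      exact hCclosed.preimage QuotientGroup.continuous_mk
    have hmemN₂ : ∀ g : G, g ∈ N₂ ↔ (QuotientGroup.mk g : G ⧸ N) ∈ C := fun g => Iff.rfl
    -- the induced map ψ : G ⧸ N → G ⧸ N₂
    have hle : N ≤ N₂.comap (MonoidHom.id G) := by
      intro g hg
      have : (QuotientGroup.mk g : G ⧸ N) = 1 := (QuotientGroup.eq_one_iff g).mpr hg
      show (QuotientGroup.mk (MonoidHom.id G g) : G ⧸ N) ∈ C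
      simpa [this] using C.one_mem
    set ψ : G ⧸ N →* G ⧸ N₂ := QuotientGroup.map N N₂ (MonoidHom.id G) hle with hψ
    have hψmk : ∀ g : G, ψ (QuotientGroup.mk g) = QuotientGroup.mk g := fun g =>
      QuotientGroup.map_mk N N₂ (MonoidHom.id G) hle g
    have hψcomp : (ψ ∘ (QuotientGroup.mk : G → G ⧸ N)) = (QuotientGroup.mk : G → G ⧸ N₂) :=
      funext hψmk
    have hψcont : Continuous ψ := by
      rw [(QuotientGroup.isQuotientMap_mk N).continuous_iff, hψcomp]
      exact QuotientGroup.continuous_mk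
    have hψsurj : Function.Surjective ψ := by
      intro q
      obtain ⟨g, rfl⟩ := QuotientGroup.mk_surjective q
      exact ⟨QuotientGroup.mk g, hψmk g⟩
    have hψopen : IsOpenMap ψ := by
      intro U hU
      have himg : ψ '' U =
          (QuotientGroup.mk : G → G ⧸ N₂) '' ((QuotientGroup.mk : G → G ⧸ N) ⁻¹' U) := by
        ext q
        constructor
        · rintro ⟨a, ha, rfl⟩
          obtain ⟨g, rfl⟩ := QuotientGroup.mk_surjective a
          exact ⟨g, ha, (hψmk g).symm⟩
        · rintro ⟨g, hg, rfl⟩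
          exact ⟨QuotientGroup.mk g, hg, hψmk g⟩
      rw [himg]
      exact QuotientGroup.isOpenMap_coe _ (hU.preimage QuotientGroup.continuous_mk)
    -- G ⧸ N₂ is totally disconnected
    have hccIff : ∀ a b : G ⧸ N, connectedComponent a = connectedComponent b ↔
        a⁻¹ * b ∈ C := by
      intro a b
      rw [connectedComponent_eq_iff_group a b]
      exact Iff.rfl
    have hwd : ∀ g g' : G, g⁻¹ * g' ∈ N₂ →
        (ConnectedComponents.mk (QuotientGroup.mk g : G ⧸ N)) =
          ConnectedComponents.mk (QuotientGroup.mk g' : G ⧸ N) := by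
      intro g g' h
      rw [ConnectedComponents.coe_eq_coe, hccIff]
      have : (QuotientGroup.mk (g⁻¹ * g') : G ⧸ N) ∈ C := (hmemN₂ _).mp h
      simpa using this
    set f : G ⧸ N₂ → ConnectedComponents (G ⧸ N) := fun q =>
      Quotient.liftOn' q (fun g => ConnectedComponents.mk (QuotientGroup.mk g : G ⧸ N))
        (fun g g' h => hwd g g' (QuotientGroup.leftRel_apply.mp h)) with hf
    have hfmk : ∀ g : G, f (QuotientGroup.mk g) =
        ConnectedComponents.mk (QuotientGroup.mk g : G ⧸ N) := fun g => rfl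
    have hfcont : Continuous f := by
      rw [(QuotientGroup.isQuotientMap_mk N₂).continuous_iff]
      have : (f ∘ (QuotientGroup.mk : G → G ⧸ N₂)) =
          fun g : G => ConnectedComponents.mk (QuotientGroup.mk g : G ⧸ N) := funext hfmk
      rw [this]
      exact ConnectedComponents.continuous_coe.comp QuotientGroup.continuous_mk
    have hfinj : Function.Injective f := by
      intro a b hab
      obtain ⟨g, rfl⟩ := QuotientGroup.mk_surjective a
      obtain ⟨g', rfl⟩ := QuotientGroup.mk_surjective b
      rw [hfmk, hfmk, ConnectedComponents.coe_eq_coe, hccIff] at hab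
      have : g⁻¹ * g' ∈ N₂ := by
        rw [hmemN₂]
        simpa using hab
      exact QuotientGroup.eq.mpr this
    haveI : TotallyDisconnectedSpace (G ⧸ N₂) := by
      refine ⟨fun t _ ht => fun x hx y hy => hfinj ?_⟩
      exact (ht.image f hfcont.continuousOn).subsingleton
        (Set.mem_image_of_mem f hx) (Set.mem_image_of_mem f hy)
    -- G ⧸ N₂ is an [IN]-group
    have hQ₂IN : IsINGroup (G ⧸ N₂) := by
      refine ⟨ψ '' W, ?_, ?_, ?_⟩
      · obtain ⟨U, hUW, hUopen, hU1⟩ := mem_nhds_iff.mp hW1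
        exact mem_nhds_iff.mpr ⟨ψ '' U, Set.image_mono hUW, hψopen U hUopen,
          ⟨1, hU1, map_one ψ⟩⟩
      · have h₁ : IsCompact (ψ '' closure W) := hWc.image hψcont
        exact h₁.of_isClosed_subset isClosed_closure
          (closure_minimal (Set.image_mono subset_closure) h₁.isClosed)
      · intro x
        obtain ⟨q, rfl⟩ := hψsurj x
        have : (fun g => ψ q * g * (ψ q)⁻¹) '' (ψ '' W) =
            ψ '' ((fun g => q * g * q⁻¹) '' W) := by
          rw [Set.image_image, Set.image_image]
          simp [map_mul]
        rw [this, hWconj q]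
    -- conclude
    obtain ⟨K, hKn, hKopen, hKcomp⟩ := h2 (G ⧸ N₂) hQ₂IN
    haveI : CompactSpace ↥K := isCompact_iff_compactSpace.mp hKcomp
    haveI := hKn
    have hKam : IsAmenable ↥K := isAmenable_of_compactSpace ↥K
    refine ⟨K.comap (QuotientGroup.mk' N₂), hKn.comap _, ?_,
      h3 N₂ hN₂n hN₂am K hKam⟩
    rw [Subgroup.coe_comap, QuotientGroup.coe_mk']
    exact hKopen.preimage QuotientGroup.continuous_mk
  · -- the easy direction (c) ⊆ (a)
    rintro ⟨N, hNn, hNopen, hNam⟩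
    haveI := hNn
    have hNclosed : IsClosed (N : Set G) := N.isClosed_of_isOpen hNopen
    refine ⟨N, hNn, hNclosed, hNam, ?_⟩
    -- the quotient is discrete, hence an [IN]-group
    have hone : IsOpen ({(1 : G ⧸ N)} : Set (G ⧸ N)) := by
      have : (QuotientGroup.mk '' (N : Set G) : Set (G ⧸ N)) = {(1 : G ⧸ N)} := by
        ext q
        simp only [Set.mem_image, Set.mem_singleton_iff]
        constructor
        · rintro ⟨g, hg, rfl⟩
          exact (QuotientGroup.eq_one_iff g).mpr hg
        · rintro rfl
          exact ⟨1, N.one_mem, rfl⟩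
      rw [← this]
      exact QuotientGroup.isOpenMap_coe _ hNopen
    haveI : IsClosed (N : Set G) := hNclosed
    refine ⟨{(1 : G ⧸ N)}, hone.mem_nhds rfl, ?_, ?_⟩
    · rw [closure_singleton]
      exact isCompact_singleton
    · intro x
      simp
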